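/- Under the λ-weight axioms, any function h: T → ℂ with Ph = λh satisfies, for every vertex x, h(x) = Σ_{y∼x} f(x,y)·(h(y) - f(y,x)h(x))/(1 - f(x,y)f(y,x)), the sum converging absolutely when deg(x) = ∞ (assuming Ph(x) is defined by an absolutely convergent sum). -/

import Mathlib

/-- Under the λ-weight axioms, any `h : T → ℂ` with `Ph = λh` (the defining sums being
absolutely convergent) satisfies, for every vertex `x`,
`h(x) = Σ_{y∼x} f(x,y)(h(y) - f(y,x)h(x))/(1 - f(x,y)f(y,x))`,
the sum converging absolutely even at vertices of infinite degree. -/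
theorem stmt15 {V : Type*} [Countable V] (G : SimpleGraph V) [DecidableRel G.Adj] (hT : G.IsTree)
    (p : V → V → ℝ)
    (hpadj : ∀ x y, 0 < p x y ↔ G.Adj x y)
    (hp0 : ∀ x y, ¬ G.Adj x y → p x y = 0)
    (hstoch : ∀ x, HasSum (fun y => p x y) 1)
    (lam : ℂ) (f : V → V → ℂ) (u : V → ℂ)
    (hu : ∀ x, HasSum (fun v => (p x v : ℂ) * f v x) (u x))
    (hne1 : ∀ x y, G.Adj x y → f x y * f y x ≠ 1)
    (hnela : ∀ x, u x ≠ lam)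
    (hla : ∀ x y, G.Adj x y →
      lam * f x y = (p x y : ℂ) + (u x - (p x y : ℂ) * f y x) * f x y)
    (h : V → ℂ)
    (hharm : ∀ x, HasSum (fun y => (p x y : ℂ) * h y) (lam * h x))
    (x : V) :
    HasSum
      (fun y => if G.Adj x y then f x y * (h y - f y x * h x) / (1 - f x y * f y x) else 0)
      (h x) := by
  have h3 : lam - u x ≠ 0 := sub_ne_zero.mpr (hnela x).symm
  have hsum : HasSum
      (fun y => ((p x y : ℂ) * h y - (p x y : ℂ) * f y x * h x) / (lam - u x))
      ((lam * h x - u x * h x) / (lam - u x)) :=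
    ((hharm x).sub ((hu x).mul_right (h x))).div_const _
  have hval : (lam * h x - u x * h x) / (lam - u x) = h x := by
    field_simp
  rw [hval] at hsum
  have heq : (fun y => if G.Adj x y then f x y * (h y - f y x * h x) / (1 - f x y * f y x) else 0)
      = fun y => ((p x y : ℂ) * h y - (p x y : ℂ) * f y x * h x) / (lam - u x) := by
    funext y
    by_cases hadj : G.Adj x y
    · simp only [hadj, if_true]
      have h2 : (1 : ℂ) - f x y * f y x ≠ 0 := sub_ne_zero.mpr (hne1 x y hadj).symm
      have key := hla x y hadj
      field_simp
      ring_nf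
      ring_nf at key
      linear_combination (h y - f y x * h x) * key
    · simp [hadj, hp0 x y hadj]
  rw [heq]
  exact hsum
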